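/- There exists a non-decisive but complete defeasible theory: for D with rules r₁: p ⇒ p and r₂: ⇒ ¬p and superiority r₂ > r₁, the dependency graph of D has a cycle (so D is not decisive), yet D ⊢ -∂p and D ⊢ +∂¬p. -/
import Mathlib


/-! Core: propositional Defeasible Logic (proof theory via derivations) -/

/-- Literals: positive or negative atoms. -/
inductive Lit : Type
  | pos : ℕ → Lit
  | neg : ℕ → Lit
deriving DecidableEq, Repr

/-- The complement `~q` of a literal. -/
def Lit.compl : Lit → Lit
  | .pos n => .neg n
  | .neg n => .pos n

/-- The three kinds of rules in a defeasible theory. -/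
inductive RuleKind : Type
  | strict | defeasible | defeater
deriving DecidableEq, Repr

/-- A rule with a unique label (name), kind, antecedent and literal head. -/
structure DLRule : Type where
  name : ℕ
  kind : RuleKind
  ante : List Lit
  head : Lit
deriving DecidableEq, Repr

/-- A (finite, propositional) defeasible theory `D = (F, R, >)`. -/
structure DTheory : Type where
  facts : Finset Lit
  rules : Finset DLRule
  sup : DLRule → DLRule → Prop

/-- The four proof tags `+Δ`, `-Δ`, `+∂`, `-∂`. -/
inductive Tag : Type
  | pDelta | mDelta | pPartial | mPartial
deriving DecidableEq, Repr

/-- A tagged literal (a conclusion). -/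
abbrev TaggedLit := Tag × Lit

/-- The inference conditions of Defeasible Logic: the tagged literal `c` may
be appended to a derivation whose earlier lines are `prev`. -/
def ValidLine (D : DTheory) (prev : List TaggedLit) : TaggedLit → Prop
  | (Tag.pDelta, q) =>
      q ∈ D.facts ∨
      ∃ r ∈ D.rules, r.kind = RuleKind.strict ∧ r.head = q ∧
        ∀ a ∈ r.ante, (Tag.pDelta, a) ∈ prev
  | (Tag.mDelta, q) =>
      q ∉ D.facts ∧
      ∀ r ∈ D.rules, r.kind = RuleKind.strict → r.head = q →
        ∃ a ∈ r.ante, (Tag.mDelta, a) ∈ prev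
  | (Tag.pPartial, q) =>
      (Tag.pDelta, q) ∈ prev ∨
      ((∃ r ∈ D.rules, r.kind ≠ RuleKind.defeater ∧ r.head = q ∧
          ∀ a ∈ r.ante, (Tag.pPartial, a) ∈ prev) ∧
       (Tag.mDelta, q.compl) ∈ prev ∧
       ∀ s ∈ D.rules, s.head = q.compl →
         (∃ a ∈ s.ante, (Tag.mPartial, a) ∈ prev) ∨
         (∃ t ∈ D.rules, t.kind ≠ RuleKind.defeater ∧ t.head = q ∧
           (∀ a ∈ t.ante, (Tag.pPartial, a) ∈ prev) ∧ D.sup t s))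
  | (Tag.mPartial, q) =>
      (Tag.mDelta, q) ∈ prev ∧
      ((∀ r ∈ D.rules, r.kind ≠ RuleKind.defeater → r.head = q →
          ∃ a ∈ r.ante, (Tag.mPartial, a) ∈ prev) ∨
       (Tag.pDelta, q.compl) ∈ prev ∨
       (∃ s ∈ D.rules, s.head = q.compl ∧
          (∀ a ∈ s.ante, (Tag.pPartial, a) ∈ prev) ∧
          ∀ t ∈ D.rules, t.kind ≠ RuleKind.defeater → t.head = q →
            (∃ a ∈ t.ante, (Tag.mPartial, a) ∈ prev) ∨ ¬ D.sup t s))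

/-- `P` is a derivation in `D`: a finite sequence of tagged literals each of
which satisfies the inference conditions w.r.t. the earlier lines. -/
def IsDerivation (D : DTheory) (P : List TaggedLit) : Prop :=
  ∀ (i : ℕ) (h : i < P.length), ValidLine D (P.take i) (P.get ⟨i, h⟩)

/-- `D ⊢ (t, q)` : the tagged literal is a line of some derivation in `D`. -/
def Proves (D : DTheory) (t : Tag) (q : Lit) : Prop :=
  ∃ P : List TaggedLit, IsDerivation D P ∧ (t, q) ∈ P

/-- `D ⊢ +Δ q`. -/
abbrev PDelta (D : DTheory) (q : Lit) : Prop := Proves D Tag.pDelta q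
/-- `D ⊢ -Δ q`. -/
abbrev MDelta (D : DTheory) (q : Lit) : Prop := Proves D Tag.mDelta q
/-- `D ⊢ +∂ q`. -/
abbrev PPartial (D : DTheory) (q : Lit) : Prop := Proves D Tag.pPartial q
/-- `D ⊢ -∂ q`. -/
abbrev MPartial (D : DTheory) (q : Lit) : Prop := Proves D Tag.mPartial q

/-- `q` is strictly unknowable in `D`. -/
def StrictlyUnknowable (D : DTheory) (q : Lit) : Prop := ¬ PDelta D q ∧ ¬ MDelta D q

/-- `q` is defeasibly unknowable in `D`. -/
def DefeasiblyUnknowable (D : DTheory) (q : Lit) : Prop := ¬ PPartial D q ∧ ¬ MPartial D q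

/-- `q` is unknowable in `D`. -/
def Unknowable (D : DTheory) (q : Lit) : Prop :=
  StrictlyUnknowable D q ∨ DefeasiblyUnknowable D q

/-- The point `{q, ~q}` of the dependency graph corresponding to a literal `q`. -/
def Lit.pt (q : Lit) : Set Lit := {q, q.compl}

/-- Arc of the dependency graph `DG(D)` from point `{b,~b}` to point `{a,~a}`:
there is a strict or defeasible rule whose head is in `{b,~b}` and some antecedent
in `{a,~a}`.  (Stated on representative literals; it is complement-invariant.) -/
def DepArc (D : DTheory) (b a : Lit) : Prop :=
  ∃ r ∈ D.rules, r.kind ≠ RuleKind.defeater ∧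
    (r.head = b ∨ r.head = b.compl) ∧ (a ∈ r.ante ∨ a.compl ∈ r.ante)

/-- `D` is decisive iff its dependency graph is acyclic. -/
def Decisive (D : DTheory) : Prop := ∀ q : Lit, ¬ Relation.TransGen (DepArc D) q q

/-- `r₁ : p ⇒ p`. -/
def rSelf : DLRule := ⟨1, RuleKind.defeasible, [Lit.pos 0], Lit.pos 0⟩
/-- `r₂ : ⇒ ¬p`. -/
def rNeg : DLRule := ⟨2, RuleKind.defeasible, [], Lit.neg 0⟩
/-- The theory `({}, {r₁, r₂}, {r₂ > r₁})`. -/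
def Dnc : DTheory := ⟨∅, {rSelf, rNeg}, fun r s => r = rNeg ∧ s = rSelf⟩

def derivNC : List TaggedLit :=
  [(Tag.mDelta, Lit.pos 0), (Tag.mDelta, Lit.neg 0),
   (Tag.mPartial, Lit.pos 0), (Tag.pPartial, Lit.neg 0)]

lemma derivNC_isDeriv : IsDerivation Dnc derivNC := by
  intro i h
  match i with
  | 0 =>
      simp [derivNC, ValidLine, Dnc, rSelf, rNeg]
  | 1 =>
      simp [derivNC, ValidLine, Dnc, rSelf, rNeg]
  | 2 =>
      refine ⟨by simp [derivNC], Or.inr (Or.inr ?_)⟩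
      refine ⟨rNeg, by simp [Dnc], rfl, by simp [rNeg], ?_⟩
      intro t ht hk hh
      right
      rintro ⟨h1, h2⟩
      simp [Dnc, rSelf, rNeg] at ht
      rcases ht with rfl | rfl
      · simp [rSelf, rNeg] at h1
      · simp [rNeg] at hh
  | 3 =>
      refine Or.inr ⟨⟨rNeg, by simp [Dnc], by simp [rNeg], rfl, by simp [rNeg]⟩,
        by simp [derivNC, Lit.compl], ?_⟩
      intro s hs hh
      left
      simp [Dnc, rSelf, rNeg] at hs
      rcases hs with rfl | rfl
      · exact ⟨Lit.pos 0, by simp [rSelf], by simp [derivNC]⟩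
      · simp [rNeg, Lit.compl] at hh

/-- `Dnc` is not decisive (its dependency graph has a cycle),
yet `Dnc ⊢ -∂p` and `Dnc ⊢ +∂¬p`, so it is complete. -/
theorem nondecisive_but_complete :
    ¬ Decisive Dnc ∧ MPartial Dnc (Lit.pos 0) ∧ PPartial Dnc (Lit.neg 0) := by
  refine ⟨?_, ⟨derivNC, derivNC_isDeriv, by simp [derivNC]⟩,
    ⟨derivNC, derivNC_isDeriv, by simp [derivNC]⟩⟩
  intro h
  exact h (Lit.pos 0) (Relation.TransGen.single
    ⟨rSelf, by simp [Dnc], by simp [rSelf], Or.inl rfl, Or.inl (by simp [rSelf])⟩)
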